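/- Let A be a noetherian commutative ring with an action of a group G admitting a Reynolds operator E: A → A^G (an A^G-linear projection onto the invariants satisfying E(ab) = aE(b) for a ∈ A^G). Let T₀ be an A-module that is finitely generated as an A-module, equipped with a compatible G-action and Reynolds operator. Then the invariant submodule T₀^G is finitely generated as an A^G-module. -/

import Mathlib

/-- If `A` is a noetherian commutative ring with a `G`-action admitting a
Reynolds operator, and `M` (= T₀) is a finitely generated `A`-module with a compatible
`G`-action and Reynolds operator, then the invariant submodule `M^G` is finitely
generated over `A^G`: there are finitely many invariant elements `t i` such that every
invariant `m` is a combination `∑ cᵢ • tᵢ` with invariant coefficients `cᵢ ∈ A^G`. -/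
theorem stmt_0 {A : Type*} [CommRing A] [IsNoetherianRing A]
    {G : Type*} [Group G] [MulSemiringAction G A]
    {M : Type*} [AddCommGroup M] [Module A M] [Module.Finite A M]
    [DistribMulAction G M]
    (hcompat : ∀ (g : G) (a : A) (m : M), g • (a • m) = (g • a) • (g • m))
    (EA : A → A)
    (hEA_add : ∀ a b : A, EA (a + b) = EA a + EA b)
    (hEA_inv : ∀ (a : A) (g : G), g • EA a = EA a)
    (hEA_id : ∀ a : A, (∀ g : G, g • a = a) → EA a = a)
    (hEA_lin : ∀ a b : A, (∀ g : G, g • a = a) → EA (a * b) = a * EA b)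
    (EM : M → M)
    (hEM_add : ∀ m n : M, EM (m + n) = EM m + EM n)
    (hEM_inv : ∀ (m : M) (g : G), g • EM m = EM m)
    (hEM_id : ∀ m : M, (∀ g : G, g • m = m) → EM m = m)
    (hEM_rey : ∀ (a : A) (m : M), (∀ g : G, g • m = m) → EM (a • m) = EA a • m) :
    ∃ (n : ℕ) (t : Fin n → M), (∀ i, ∀ g : G, g • t i = t i) ∧
      ∀ m : M, (∀ g : G, g • m = m) →
        ∃ c : Fin n → A, (∀ i, ∀ g : G, g • c i = c i) ∧ m = ∑ i, c i • t i := by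
  classical
  -- the set of invariants
  set S : Set M := {m | ∀ g : G, g • m = m} with hS
  have hNoeth : IsNoetherian A M := inferInstance
  have hfg : (Submodule.span A S).FG := IsNoetherian.noetherian _
  obtain ⟨F, hF⟩ := hfg
  -- each generator lies in the span of a finite subset of S
  have hsub : ∀ x ∈ F, ∃ T : Finset M, ↑T ⊆ S ∧ x ∈ Submodule.span A (T : Set M) := by
    intro x hx
    exact Submodule.mem_span_finite_of_mem_span (hF ▸ Submodule.subset_span hx)
  choose Tx hTxS hTxmem using hsub
  set T : Finset M := F.attach.biUnion (fun x => Tx x.1 x.2) with hT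
  have hTS : (T : Set M) ⊆ S := by
    intro x hx
    simp only [hT, Finset.coe_biUnion, Set.mem_iUnion] at hx
    obtain ⟨y, hy, hx⟩ := hx
    exact hTxS y.1 y.2 hx
  have hspanT : S ⊆ (Submodule.span A (T : Set M) : Set M) := by
    intro m hm
    have hmF : m ∈ Submodule.span A (F : Set M) := by
      rw [hF]; exact Submodule.subset_span hm
    refine Submodule.span_le.2 ?_ hmF
    intro x hx
    refine Submodule.span_mono ?_ (hTxmem x hx)
    intro y hy
    simp only [hT, Finset.coe_biUnion, Set.mem_iUnion]
    exact ⟨⟨x, hx⟩, Finset.mem_attach _ _, hy⟩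
  -- EM preserves 0 and finite sums
  have hEM0 : EM 0 = 0 := by
    have := hEM_add 0 0
    simpa using this.symm
  have hEMsum : ∀ (s : Finset M) (v : M → M), EM (∑ x ∈ s, v x) = ∑ x ∈ s, EM (v x) := by
    intro s v
    induction s using Finset.induction_on with
    | empty => simpa using hEM0
    | insert _ _ hx ih => rw [Finset.sum_insert hx, Finset.sum_insert hx, hEM_add, ih]
  -- enumerate T
  refine ⟨T.card, fun i => (T.equivFin.symm i : M), ?_, ?_⟩
  · intro i g
    exact hTS (T.equivFin.symm i).2 g
  · intro m hm
    have hmem : m ∈ Submodule.span A (T : Set M) := hspanT hm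
    obtain ⟨f, -, hf⟩ := Submodule.mem_span_finset.1 hmem
    refine ⟨fun i => EA (f (T.equivFin.symm i)), fun i g => hEA_inv _ g, ?_⟩
    have key : m = ∑ x ∈ T, EA (f x) • x := by
      calc m = EM m := (hEM_id m hm).symm
        _ = EM (∑ x ∈ T, f x • x) := by rw [hf]
        _ = ∑ x ∈ T, EM (f x • x) := hEMsum _ _
        _ = ∑ x ∈ T, EA (f x) • x := by
            refine Finset.sum_congr rfl fun x hx => ?_
            exact hEM_rey (f x) x (hTS hx)
    rw [key]
    rw [show (∑ x ∈ T, EA (f x) • x) = ∑ y : T, EA (f (y : M)) • (y : M) from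
      (Finset.sum_attach T (fun x => EA (f x) • x)).symm]
    exact (Equiv.sum_comp T.equivFin.symm (fun y : T => EA (f (y : M)) • (y : M))).symm
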